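/- arXiv:2311.16643 — 3 statements merged into one kernel-verified Lean document; each statement's English description precedes it below -/
import Mathlib

section
/- Let L be a finite lattice, let T be a trinket-removal set of L, and let R be the induced lattice on L \ T. Then R is a rack: for every decoration site (a,b) of R, either a has exactly two upper covers in R or there is no doubly irreducible element of R strictly between a and b, i.e., min(d, k−2) = 0 for every decoration site of R. -/
/-- An element of a finite lattice is *doubly irreducible* if it has exactly one
upper cover and exactly one lower cover. -/
def DoublyIrreducible {α : Type*} [Lattice α] (x : α) : Prop :=
  (∃! u, x ⋖ u) ∧ (∃! l, l ⋖ x)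

/-- A *decoration site* of a lattice is a pair `(a, b)` such that the set of upper
covers of `a` equals the set of lower covers of `b`, and `a` has at least two
upper covers. -/
def DecorationSite {α : Type*} [Lattice α] (a b : α) : Prop :=
  {x | a ⋖ x} = {x | x ⋖ b} ∧ 2 ≤ {x | a ⋖ x}.ncard

/-- The doubly irreducible elements strictly between `a` and `b`. -/
def siteTrinkets {α : Type*} [Lattice α] (a b : α) : Set α :=
  {x | DoublyIrreducible x ∧ a < x ∧ x < b}

/-- A *trinket-removal set* of a lattice: for every decoration site `(a, b)` it
contains exactly `min d (k - 2)` doubly irreducible elements strictly between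
`a` and `b` (where `d` is the number of doubly irreducible elements strictly
between `a` and `b`, and `k` is the number of upper covers of `a`), and it
contains no other elements. -/
def TrinketRemovalSet {α : Type*} [Lattice α] (T : Set α) : Prop :=
  (∀ a b : α, DecorationSite a b →
      (T ∩ siteTrinkets a b).ncard =
        min (siteTrinkets a b).ncard ({x | a ⋖ x}.ncard - 2)) ∧
  ∀ t ∈ T, ∃ a b : α, DecorationSite a b ∧ t ∈ siteTrinkets a b

/-- A finite lattice is a *rack* if `min d (k - 2) = 0` for every decoration site. -/
def IsRack (α : Type*) [Lattice α] : Prop :=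
  ∀ a b : α, DecorationSite a b →
    min (siteTrinkets a b).ncard ({x | a ⋖ x}.ncard - 2) = 0

/-- A *knot* of a finite lattice is an element distinct from top and bottom that
is comparable with every element. -/
def IsKnot {α : Type*} [Lattice α] (x : α) : Prop :=
  (∃ y, x < y) ∧ (∃ y, y < x) ∧ ∀ y, x ≤ y ∨ y ≤ x

/-- Birkhoff's semimodularity condition: whenever distinct `x` and `y` both
cover a common element `a`, the join `x ⊔ y` covers both `x` and `y`. -/
def Semimodular (α : Type*) [Lattice α] : Prop :=
  ∀ a x y : α, x ≠ y → a ⋖ x → a ⋖ y → x ⋖ x ⊔ y ∧ y ⋖ x ⊔ y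

/-- The modular law: for all `x ≤ z`, `x ⊔ (y ⊓ z) = (x ⊔ y) ⊓ z`. -/
def ModularLaw (α : Type*) [Lattice α] : Prop :=
  ∀ x y z : α, x ≤ z → x ⊔ (y ⊓ z) = (x ⊔ y) ⊓ z

section Aux
variable {α : Type*} [Lattice α] [Finite α]

/-- Every element strictly between the corners of a decoration site covers the
lower corner and is covered by the upper corner. -/
lemma site_mid {a b x : α} (h : DecorationSite a b) (h1 : a < x) (h2 : x < b) :
    a ⋖ x ∧ x ⋖ b := by
  obtain ⟨c, hc, hcx⟩ := exists_covBy_le_of_lt h1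
  obtain ⟨c', hxc', hc'⟩ := exists_le_covBy_of_lt h2
  have hac' : a ⋖ c' := (Set.ext_iff.mp h.1 c').mpr hc'
  have hcc' : c = c' := by
    rcases lt_or_eq_of_le (hcx.trans hxc') with hlt | heq
    · exact absurd hlt (hac'.2 hc.lt)
    · exact heq
  have hxc : x = c := le_antisymm (hcc' ▸ hxc') hcx
  have hax : a ⋖ x := hxc ▸ hc
  exact ⟨hax, (Set.ext_iff.mp h.1 x).mp hax⟩

lemma site_two_covers {a b : α} (h : DecorationSite a b) :
    ∃ c₁ c₂ : α, a ⋖ c₁ ∧ a ⋖ c₂ ∧ c₁ ≠ c₂ := by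
  obtain ⟨c₁, hc₁, c₂, hc₂, hne⟩ := (Set.one_lt_ncard (Set.toFinite _)).mp h.2
  exact ⟨c₁, c₂, hc₁, hc₂, hne⟩

variable {T : Set α} (hT : TrinketRemovalSet T)
include hT

/-- Structure of an element of a trinket-removal set. -/
lemma t_struct {t : α} (ht : t ∈ T) :
    ∃ a b : α, DecorationSite a b ∧ DoublyIrreducible t ∧ a ⋖ t ∧ t ⋖ b ∧
      (∀ y, y ⋖ t → y = a) ∧ (∀ y, t ⋖ y → y = b) := by
  obtain ⟨a, b, hab, hdi, h1, h2⟩ := hT.2 t ht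
  obtain ⟨hat, htb⟩ := site_mid hab h1 h2
  obtain ⟨u, -, hu⟩ := hdi.1
  obtain ⟨l, -, hl⟩ := hdi.2
  exact ⟨a, b, hab, hdi, hat, htb,
    fun y hy => (hl y hy).trans (hl a hat).symm,
    fun y hy => (hu y hy).trans (hu b htb).symm⟩

lemma lower_corner_notMem {a b : α} (hab : DecorationSite a b) : a ∉ T := by
  intro haT
  obtain ⟨-, -, -, hdi, -, -, -, -⟩ := t_struct hT haT
  obtain ⟨c₁, c₂, hc₁, hc₂, hne⟩ := site_two_covers hab
  obtain ⟨u, -, hu⟩ := hdi.1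
  exact hne ((hu c₁ hc₁).trans (hu c₂ hc₂).symm)

lemma upper_corner_notMem {a b : α} (hab : DecorationSite a b) : b ∉ T := by
  intro hbT
  obtain ⟨-, -, -, hdi, -, -, -, -⟩ := t_struct hT hbT
  obtain ⟨c₁, c₂, hc₁, hc₂, hne⟩ := site_two_covers hab
  obtain ⟨l, -, hl⟩ := hdi.2
  have h₁ : c₁ ⋖ b := (Set.ext_iff.mp hab.1 c₁).mp hc₁
  have h₂ : c₂ ⋖ b := (Set.ext_iff.mp hab.1 c₂).mp hc₂
  exact hne ((hl c₁ h₁).trans (hl c₂ h₂).symm)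

lemma inter_covers_eq {a b : α} (hab : DecorationSite a b) :
    T ∩ {x | a ⋖ x} = T ∩ siteTrinkets a b := by
  ext u
  constructor
  · rintro ⟨huT, hu⟩
    obtain ⟨-, -, -, hdi, -, -, -, -⟩ := t_struct hT huT
    exact ⟨huT, hdi, hu.lt, ((Set.ext_iff.mp hab.1 u).mp hu).lt⟩
  · rintro ⟨huT, -, h1, h2⟩
    exact ⟨huT, (site_mid hab h1 h2).1⟩

lemma two_nonT_covers {a b : α} (hab : DecorationSite a b) :
    ∃ c₁ c₂ : α, a ⋖ c₁ ∧ c₁ ∉ T ∧ a ⋖ c₂ ∧ c₂ ∉ T ∧ c₁ ≠ c₂ := by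
  have hcount := hT.1 a b hab
  have hmin : (T ∩ siteTrinkets a b).ncard ≤ {x | a ⋖ x}.ncard - 2 :=
    hcount.le.trans (min_le_right _ _)
  have hsub : T ∩ {x | a ⋖ x} ⊆ {x | a ⋖ x} := Set.inter_subset_right
  have hdiffeq : {x | a ⋖ x} \ T = {x | a ⋖ x} \ (T ∩ {x | a ⋖ x}) := by
    ext u; simp only [Set.mem_diff, Set.mem_inter_iff]; tauto
  have hdcard : ({x | a ⋖ x} \ T).ncard
      = {x | a ⋖ x}.ncard - (T ∩ {x | a ⋖ x}).ncard := by
    rw [hdiffeq, Set.ncard_diff hsub (Set.toFinite _)]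
  have hk2 := hab.2
  rw [inter_covers_eq hT hab, hcount] at hdcard
  have h2 : 1 < ({x | a ⋖ x} \ T).ncard := by omega
  obtain ⟨c₁, hc₁, c₂, hc₂, hne⟩ := (Set.one_lt_ncard (Set.toFinite _)).mp h2
  exact ⟨c₁, c₂, hc₁.1, hc₁.2, hc₂.1, hc₂.2, hne⟩

variable {S : Sublattice α} (hS : (S : Set α) = Tᶜ)
include hS

omit hT in
lemma mem_S_of_not_T {u : α} (hu : u ∉ T) : u ∈ S := by
  rw [← SetLike.mem_coe, hS]; exact hu

omit hT in
lemma not_T_of_mem_S (p : ↥S) : (p : α) ∉ T := by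
  have := p.2
  rw [← SetLike.mem_coe, hS] at this
  exact this

omit hT hS [Finite α] in
lemma sub_lt_iff {p q : ↥S} : p < q ↔ (p : α) < (q : α) := Iff.rfl

lemma covBy_coe_iff {p q : ↥S} : p ⋖ q ↔ (p : α) ⋖ (q : α) := by
  constructor
  · intro hpq
    refine ⟨sub_lt_iff.mp hpq.lt, fun w hpw hwq => ?_⟩
    have hwT : w ∈ T := by
      by_contra hw
      exact hpq.2 (show p < ⟨w, mem_S_of_not_T hS hw⟩ from hpw) hwq
    obtain ⟨a, b, hab, -, hat, htb, hucoc, hucov⟩ := t_struct hT hwT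
    have hpa : (p : α) ≤ a := by
      obtain ⟨c, hpc, hcw⟩ := exists_le_covBy_of_lt hpw
      rwa [hucoc c hcw] at hpc
    have hbq : b ≤ (q : α) := by
      obtain ⟨c, hwc, hcq⟩ := exists_covBy_le_of_lt hwq
      rwa [hucov c hwc] at hcq
    have hab' : a < b := hat.lt.trans htb.lt
    have hpa' : (p : α) = a := by
      rcases hpa.lt_or_eq with h | h
      · have haS : a ∈ S := mem_S_of_not_T hS (lower_corner_notMem hT hab)
        exact ((hpq.2 (show p < ⟨a, haS⟩ from h)
          (show ((⟨a, haS⟩ : ↥S) : α) < (q : α) from lt_of_lt_of_le hab' hbq))).elim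
      · exact h
    obtain ⟨c, c₂, hc, hcT, -, -, -⟩ := two_nonT_covers hT hab
    have hcb : c ⋖ b := (Set.ext_iff.mp hab.1 c).mp hc
    exact hpq.2 (show ((p : α) < c) by rw [hpa']; exact hc.lt)
      (show ((⟨c, mem_S_of_not_T hS hcT⟩ : ↥S) : α) < (q : α) from lt_of_lt_of_le hcb.lt hbq)
  · intro h
    exact ⟨sub_lt_iff.mpr h.lt, fun r h1 h2 => h.2 (sub_lt_iff.mp h1) (sub_lt_iff.mp h2)⟩

end Aux

theorem stmt_6' {α : Type*} [Lattice α] [Finite α] [Nonempty α] (T : Set α)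
    (hT : TrinketRemovalSet T) (S : Sublattice α) (hS : (S : Set α) = Tᶜ) :
    ∀ a b : ↥S, DecorationSite a b →
      min (siteTrinkets a b).ncard ({x | a ⋖ x}.ncard - 2) = 0 := by
  intro a' b' hsite
  by_contra hmin
  have hd0 : (siteTrinkets a' b').ncard ≠ 0 := by omega
  have hk3 : 3 ≤ {x : ↥S | a' ⋖ x}.ncard := by omega
  obtain ⟨x, hxDI, hax, hxb⟩ := Set.nonempty_of_ncard_ne_zero hd0
  obtain ⟨haxc, hxbc⟩ := site_mid hsite hax hxb
  have haxL : (a' : α) ⋖ (x : α) := (covBy_coe_iff hT hS).mp haxc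
  have hxbL : (x : α) ⋖ (b' : α) := (covBy_coe_iff hT hS).mp hxbc
  -- x has a unique cover in L, namely b'
  have hcov_unique : ∀ u : α, (x : α) ⋖ u → u = (b' : α) := by
    intro u hu
    by_cases huT : u ∈ T
    · obtain ⟨a0, b0, hab0, -, -, -, hucoc0, -⟩ := t_struct hT huT
      have hxa0 : a0 = (x : α) := (hucoc0 _ hu).symm
      subst hxa0
      obtain ⟨c₁, c₂, hc₁, hc₁T, hc₂, hc₂T, hne⟩ := two_nonT_covers hT hab0
      have h1 : x ⋖ (⟨c₁, mem_S_of_not_T hS hc₁T⟩ : ↥S) := (covBy_coe_iff hT hS).mpr hc₁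
      have h2 : x ⋖ (⟨c₂, mem_S_of_not_T hS hc₂T⟩ : ↥S) := (covBy_coe_iff hT hS).mpr hc₂
      obtain ⟨u0, -, hu0⟩ := hxDI.1
      exact absurd (congrArg Subtype.val ((hu0 _ h1).trans (hu0 _ h2).symm)) hne
    · have h1 : x ⋖ (⟨u, mem_S_of_not_T hS huT⟩ : ↥S) := (covBy_coe_iff hT hS).mpr hu
      obtain ⟨u0, -, hu0⟩ := hxDI.1
      exact congrArg Subtype.val ((hu0 _ h1).trans (hu0 _ hxbc).symm)
  -- x has a unique cocover in L, namely a'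
  have hcoc_unique : ∀ v : α, v ⋖ (x : α) → v = (a' : α) := by
    intro v hv
    by_cases hvT : v ∈ T
    · obtain ⟨a0, b0, hab0, -, -, -, -, hucov0⟩ := t_struct hT hvT
      have hxb0 : b0 = (x : α) := (hucov0 _ hv).symm
      subst hxb0
      obtain ⟨c₁, c₂, hc₁, hc₁T, hc₂, hc₂T, hne⟩ := two_nonT_covers hT hab0
      have h1c : c₁ ⋖ (x : α) := (Set.ext_iff.mp hab0.1 c₁).mp hc₁
      have h2c : c₂ ⋖ (x : α) := (Set.ext_iff.mp hab0.1 c₂).mp hc₂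
      have h1 : (⟨c₁, mem_S_of_not_T hS hc₁T⟩ : ↥S) ⋖ x := (covBy_coe_iff hT hS).mpr h1c
      have h2 : (⟨c₂, mem_S_of_not_T hS hc₂T⟩ : ↥S) ⋖ x := (covBy_coe_iff hT hS).mpr h2c
      obtain ⟨l0, -, hl0⟩ := hxDI.2
      exact absurd (congrArg Subtype.val ((hl0 _ h1).trans (hl0 _ h2).symm)) hne
    · have h1 : (⟨v, mem_S_of_not_T hS hvT⟩ : ↥S) ⋖ x := (covBy_coe_iff hT hS).mpr hv
      obtain ⟨l0, -, hl0⟩ := hxDI.2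
      exact congrArg Subtype.val ((hl0 _ h1).trans (hl0 _ haxc).symm)
  have hDIL : DoublyIrreducible (x : α) :=
    ⟨⟨(b' : α), hxbL, fun y hy => hcov_unique y hy⟩,
     ⟨(a' : α), haxL, fun y hy => hcoc_unique y hy⟩⟩
  -- (a', b') is a decoration site of L
  have hcovset : {u : α | (a' : α) ⋖ u} = {u : α | u ⋖ (b' : α)} := by
    ext u
    constructor
    · intro hu
      by_cases huT : u ∈ T
      · obtain ⟨a0, b0, hab0, -, -, htb0, hucoc0, -⟩ := t_struct hT huT
        have ha0 : a0 = (a' : α) := (hucoc0 _ hu).symm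
        subst ha0
        have hxb0 : (x : α) ⋖ b0 := (Set.ext_iff.mp hab0.1 (x : α)).mp haxL
        have : b0 = (b' : α) := hcov_unique _ hxb0
        exact this ▸ htb0
      · have h1 : a' ⋖ (⟨u, mem_S_of_not_T hS huT⟩ : ↥S) := (covBy_coe_iff hT hS).mpr hu
        have h2 : (⟨u, mem_S_of_not_T hS huT⟩ : ↥S) ⋖ b' :=
          (Set.ext_iff.mp hsite.1 _).mp h1
        exact (covBy_coe_iff hT hS).mp h2
    · intro hu
      by_cases huT : u ∈ T
      · obtain ⟨a0, b0, hab0, -, hat0, htb0, -, hucov0⟩ := t_struct hT huT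
        have hb0 : b0 = (b' : α) := (hucov0 _ hu).symm
        subst hb0
        have hax0 : a0 ⋖ (x : α) := (Set.ext_iff.mp hab0.1 (x : α)).mpr hxbL
        have : a0 = (a' : α) := hcoc_unique _ hax0
        exact this ▸ hat0
      · have h1 : (⟨u, mem_S_of_not_T hS huT⟩ : ↥S) ⋖ b' := (covBy_coe_iff hT hS).mpr hu
        have h2 : a' ⋖ (⟨u, mem_S_of_not_T hS huT⟩ : ↥S) :=
          (Set.ext_iff.mp hsite.1 _).mpr h1
        exact (covBy_coe_iff hT hS).mp h2
  have hLk2 : 2 ≤ {u : α | (a' : α) ⋖ u}.ncard := by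
    obtain ⟨c₁, c₂, hc₁, hc₂, hne⟩ := site_two_covers hsite
    exact (Set.one_lt_ncard (Set.toFinite _)).mpr
      ⟨(c₁ : α), (covBy_coe_iff hT hS).mp hc₁, (c₂ : α), (covBy_coe_iff hT hS).mp hc₂,
        fun h => hne (Subtype.coe_injective h)⟩
  have hLsite : DecorationSite (a' : α) (b' : α) := ⟨hcovset, hLk2⟩
  -- counting
  have hTSt := hT.1 _ _ hLsite
  have hmEq := inter_covers_eq hT hLsite
  have himg : (fun p : ↥S => (p : α)) '' {q : ↥S | a' ⋖ q}
      = {u : α | (a' : α) ⋖ u} \ T := by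
    ext u
    constructor
    · rintro ⟨q, hq, rfl⟩
      exact ⟨(covBy_coe_iff hT hS).mp hq, not_T_of_mem_S hS q⟩
    · rintro ⟨hu, huT⟩
      exact ⟨⟨u, mem_S_of_not_T hS huT⟩, (covBy_coe_iff hT hS).mpr hu, rfl⟩
  have hdiffeq : {u : α | (a' : α) ⋖ u} \ T
      = {u : α | (a' : α) ⋖ u} \ (T ∩ {u : α | (a' : α) ⋖ u}) := by
    ext u; simp only [Set.mem_diff, Set.mem_inter_iff]; tauto
  have hk' : {q : ↥S | a' ⋖ q}.ncard
      = {u : α | (a' : α) ⋖ u}.ncard - (T ∩ siteTrinkets (a' : α) (b' : α)).ncard := by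
    rw [← Set.ncard_image_of_injective _ (Subtype.coe_injective (p := fun u => u ∈ S)), himg,
      hdiffeq, Set.ncard_diff Set.inter_subset_right (Set.toFinite _), hmEq]
  have hxSt : (x : α) ∈ siteTrinkets (a' : α) (b' : α) := ⟨hDIL, haxL.lt, hxbL.lt⟩
  have hd1 : (siteTrinkets (a' : α) (b' : α)).ncard ≠ 0 :=
    Set.ncard_ne_zero_of_mem hxSt (Set.toFinite _)
  rcases le_or_gt (siteTrinkets (a' : α) (b' : α)).ncard
      ({u : α | (a' : α) ⋖ u}.ncard - 2) with hle | hlt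
  · have hminEq : (T ∩ siteTrinkets (a' : α) (b' : α)).ncard
        = (siteTrinkets (a' : α) (b' : α)).ncard := by omega
    have hfull : T ∩ siteTrinkets (a' : α) (b' : α) = siteTrinkets (a' : α) (b' : α) :=
      Set.eq_of_subset_of_ncard_le Set.inter_subset_right hminEq.ge (Set.toFinite _)
    rw [← hfull] at hxSt
    exact not_T_of_mem_S hS x hxSt.1
  · have hminEq : (T ∩ siteTrinkets (a' : α) (b' : α)).ncard
        = {u : α | (a' : α) ⋖ u}.ncard - 2 := by omega
    omega

/-- The lattice obtained by removing a trinket-removal set is a rack. -/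
theorem stmt_6 {α : Type*} [Lattice α] [Finite α] [Nonempty α] (T : Set α)
    (hT : TrinketRemovalSet T) (S : Sublattice α) (hS : (S : Set α) = Tᶜ) :
    IsRack ↥S := by
  exact stmt_6' T hT S hS
end

section
/- Let L be a finite lattice, let T be a trinket-removal set of L, and let R be the induced lattice on L \ T. Then R has a knot if and only if L has a knot; that is, R is vertically decomposable if and only if L is vertically decomposable. -/
section Aux
variable {α : Type*} [Lattice α] [Finite α]

omit [Finite α] in
lemma aux_cov_eq {a u x : α} (hu : a ⋖ u) (hax : a < x) (hxu : x ≤ u) : x = u := by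
  rcases eq_or_lt_of_le hxu with h | h
  · exact h
  · exact absurd h (hu.2 hax)

lemma aux_interval {a b z : α} (h : DecorationSite a b) (h1 : a < z) (h2 : z < b) :
    a ⋖ z ∧ z ⋖ b := by
  obtain ⟨u, hu, huz⟩ := exists_covBy_le_of_lt h1
  have hub : u ⋖ b := by
    have : u ∈ {x | a ⋖ x} := hu
    rw [h.1] at this; exact this
  have huz' : z = u := by
    rcases eq_or_lt_of_le huz with h' | h'
    · exact h'.symm
    · exact absurd h2 (hub.2 h')
  subst huz'
  exact ⟨hu, hub⟩

lemma aux_corners {T : Set α} (hT : TrinketRemovalSet T) {a b : α}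
    (h : DecorationSite a b) : a ∉ T ∧ b ∉ T := by
  have hUfin : {x | a ⋖ x}.Finite := Set.toFinite _
  obtain ⟨u, hu, v, hv, huv⟩ := (Set.one_lt_ncard hUfin).1 h.2
  have hdi : ∀ t ∈ T, DoublyIrreducible t := by
    intro t ht
    obtain ⟨a', b', _, hdi, _, _⟩ := hT.2 t ht
    exact hdi
  have hu0 : a ⋖ u := hu
  have hv0 : a ⋖ v := hv
  constructor
  · intro haT
    obtain ⟨w, _, hwu⟩ := (hdi a haT).1
    exact huv ((hwu u hu0).trans (hwu v hv0).symm)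
  · intro hbT
    have hu' : u ⋖ b := (Set.ext_iff.1 h.1 u).1 hu
    have hv' : v ⋖ b := (Set.ext_iff.1 h.1 v).1 hv
    obtain ⟨w, _, hwu⟩ := (hdi b hbT).2
    exact huv ((hwu u hu').trans (hwu v hv').symm)

lemma aux_trinket {T : Set α} (hT : TrinketRemovalSet T) {t : α} (ht : t ∈ T) :
    ∃ a b : α, DecorationSite a b ∧ a ⋖ t ∧ t ⋖ b ∧ a ∉ T ∧ b ∉ T := by
  obtain ⟨a, b, hab, _, h1, h2⟩ := hT.2 t ht
  obtain ⟨c1, c2⟩ := aux_interval hab h1 h2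
  obtain ⟨c3, c4⟩ := aux_corners hT hab
  exact ⟨a, b, hab, c1, c2, c3, c4⟩

lemma aux_knot_notin {T : Set α} (hT : TrinketRemovalSet T) {x : α}
    (hx : IsKnot x) : x ∉ T := by
  intro hxT
  obtain ⟨a, b, hab, hax, hxb, _, _⟩ := aux_trinket hT hxT
  obtain ⟨u, hu, hux⟩ := Set.exists_ne_of_one_lt_ncard hab.2 x
  have hu : a ⋖ u := hu
  rcases hx.2.2 u with h | h
  · exact hux (aux_cov_eq hu hax.lt h).symm
  · exact hux (aux_cov_eq hax hu.lt h)

/-- Counting argument: if `a < x < b` for a decoration site `(a,b)`, then some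
upper cover of `a` other than `x` survives the removal. -/
lemma aux_survivor {T : Set α} (hT : TrinketRemovalSet T) {a b x : α}
    (hab : DecorationSite a b) (h1 : a < x) (h2 : x < b) :
    ∃ u, a ⋖ u ∧ u ∉ T ∧ u ≠ x := by
  set U : Set α := {z | a ⋖ z} with hU
  have hUfin : U.Finite := Set.toFinite _
  have hsub : U ∩ T ⊆ T ∩ siteTrinkets a b := by
    rintro z ⟨hz1, hz2⟩
    obtain ⟨a', b', _, hdi, _, _⟩ := hT.2 z hz2
    have hzb : z ⋖ b := (Set.ext_iff.1 hab.1 z).1 hz1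
    exact ⟨hz2, hdi, hz1.lt, hzb.lt⟩
  have hcard : (U ∩ T).ncard ≤ U.ncard - 2 := by
    calc (U ∩ T).ncard ≤ (T ∩ siteTrinkets a b).ncard :=
          Set.ncard_le_ncard hsub (Set.toFinite _)
      _ = min (siteTrinkets a b).ncard (U.ncard - 2) := hT.1 a b hab
      _ ≤ U.ncard - 2 := min_le_right _ _
  have hdiff : (U \ T).ncard = U.ncard - (U ∩ T).ncard := by
    rw [← Set.diff_self_inter]
    exact Set.ncard_diff Set.inter_subset_left (Set.toFinite _)
  have h2le : 2 ≤ (U \ T).ncard := by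
    have hk : 2 ≤ U.ncard := hab.2
    omega
  obtain ⟨u, hu, hux⟩ := Set.exists_ne_of_one_lt_ncard h2le x
  exact ⟨u, hu.1, hu.2, hux⟩

end Aux

/-- The lattice obtained by removing a trinket-removal set has a knot iff the
original lattice has a knot: it is vertically decomposable iff the original
lattice is. -/
theorem stmt_10 {α : Type*} [Lattice α] [Finite α] [Nonempty α] (T : Set α)
    (hT : TrinketRemovalSet T) (S : Sublattice α) (hS : (S : Set α) = Tᶜ) :
    (∃ x : ↥S, IsKnot x) ↔ (∃ x : α, IsKnot x) := by
  have hmem : ∀ z : α, z ∉ T → z ∈ S := fun z hz => by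
    rw [← SetLike.mem_coe, hS]; exact hz
  constructor
  · rintro ⟨x, hx⟩
    refine ⟨(x : α), ?_, ?_, ?_⟩
    · obtain ⟨y, hy⟩ := hx.1
      exact ⟨(y : α), Subtype.coe_lt_coe.2 hy⟩
    · obtain ⟨y, hy⟩ := hx.2.1
      exact ⟨(y : α), Subtype.coe_lt_coe.2 hy⟩
    · intro y
      by_cases hyT : y ∈ T
      · obtain ⟨a, b, hab, hay, hyb, haT, hbT⟩ := aux_trinket hT hyT
        rcases hx.2.2 ⟨a, hmem a haT⟩ with h | h
        · exact Or.inl ((Subtype.coe_le_coe.2 h).trans hay.lt.le)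
        · replace h : a ≤ (x : α) := Subtype.coe_le_coe.2 h
          rcases hx.2.2 ⟨b, hmem b hbT⟩ with h' | h'
          · replace h' : (x : α) ≤ b := Subtype.coe_le_coe.2 h'
            rcases eq_or_lt_of_le h with rfl | hax
            · exact Or.inl hay.lt.le
            rcases eq_or_lt_of_le h' with rfl | hxb
            · exact Or.inr hyb.lt.le
            · exfalso
              obtain ⟨u, hu, huT, hux⟩ := aux_survivor hT hab hax hxb
              have haxcov : a ⋖ (x : α) := (aux_interval hab hax hxb).1
              rcases hx.2.2 ⟨u, hmem u huT⟩ with h'' | h''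
              · exact hux (aux_cov_eq hu hax (Subtype.coe_le_coe.2 h'')).symm
              · exact hux (aux_cov_eq haxcov hu.lt (Subtype.coe_le_coe.2 h''))
          · exact Or.inr (hyb.lt.le.trans (Subtype.coe_le_coe.2 h'))
      · rcases hx.2.2 ⟨y, hmem y hyT⟩ with h | h
        · exact Or.inl (Subtype.coe_le_coe.2 h)
        · exact Or.inr (Subtype.coe_le_coe.2 h)
  · rintro ⟨x, hx⟩
    have hxT : x ∉ T := aux_knot_notin hT hx
    refine ⟨⟨x, hmem x hxT⟩, ?_, ?_, ?_⟩
    · obtain ⟨y, hy⟩ := hx.1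
      by_cases hyT : y ∈ T
      · obtain ⟨a, b, hab, hay, hyb, haT, hbT⟩ := aux_trinket hT hyT
        exact ⟨⟨b, hmem b hbT⟩, Subtype.coe_lt_coe.1 (hy.trans hyb.lt)⟩
      · exact ⟨⟨y, hmem y hyT⟩, Subtype.coe_lt_coe.1 hy⟩
    · obtain ⟨y, hy⟩ := hx.2.1
      by_cases hyT : y ∈ T
      · obtain ⟨a, b, hab, hay, hyb, haT, hbT⟩ := aux_trinket hT hyT
        exact ⟨⟨a, hmem a haT⟩, Subtype.coe_lt_coe.1 (hay.lt.trans hy)⟩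
      · exact ⟨⟨y, hmem y hyT⟩, Subtype.coe_lt_coe.1 hy⟩
    · rintro ⟨y, hyS⟩
      rcases hx.2.2 y with h | h
      · exact Or.inl (Subtype.coe_le_coe.1 h)
      · exact Or.inr (Subtype.coe_le_coe.1 h)
end

section
/- Let L be a finite lattice, let T be a trinket-removal set of L, and let R be the induced lattice on L \ T. Then L is semimodular if and only if R is semimodular, where semimodularity is Birkhoff's condition: whenever distinct elements x and y both cover a common element a, the join x ⊔ y covers both x and y. -/
section Aux

variable {α : Type*} [Lattice α] [Finite α]

/-- In a decoration site interval, every strictly intermediate element covers `a`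
and is covered by `b`. -/
lemma site_covers {a b x : α} (h : DecorationSite a b) (hax : a < x) (hxb : x < b) :
    a ⋖ x ∧ x ⋖ b := by
  obtain ⟨c, hc, hcx⟩ := exists_covBy_le_of_lt hax
  have hcb : c ⋖ b := by
    have : c ∈ {y | a ⋖ y} := hc
    rwa [h.1] at this
  have hcex : c = x := by
    rcases hcx.lt_or_eq with h' | h'
    · exact absurd hxb (hcb.2 h')
    · exact h'
  subst hcex
  exact ⟨hc, hcb⟩

lemma trinket_props {T : Set α} (hT : TrinketRemovalSet T) {t : α} (ht : t ∈ T) :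
    ∃ a b : α, DecorationSite a b ∧ a ⋖ t ∧ t ⋖ b ∧
      (∀ l, l ⋖ t → l = a) ∧ (∀ u, t ⋖ u → u = b) ∧ a ∉ T ∧ b ∉ T := by
  obtain ⟨a, b, hsite, hdi, hat, htb⟩ := hT.2 t ht
  obtain ⟨hcov1, hcov2⟩ := site_covers hsite hat htb
  have hlu : (∀ l, l ⋖ t → l = a) ∧ (∀ u, t ⋖ u → u = b) := by
    constructor
    · intro l hl
      obtain ⟨l₀, hl₀, hl₀u⟩ := hdi.2
      rw [hl₀u l hl, hl₀u a hcov1]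
    · intro u hu
      obtain ⟨u₀, hu₀, hu₀u⟩ := hdi.1
      rw [hu₀u u hu, hu₀u b hcov2]
  have hkey : ∀ c : α, c ∈ T → ¬ (∃! u, c ⋖ u) ∨ ¬ (∃! l, l ⋖ c) → False := by
    intro c hc hcon
    obtain ⟨a', b', _, hdi', _, _⟩ := hT.2 c hc
    rcases hcon with h | h
    · exact h hdi'.1
    · exact h hdi'.2
  have htwo : ∃ u ∈ {x | a ⋖ x}, ∃ v ∈ {x | a ⋖ x}, u ≠ v :=
    (Set.one_lt_ncard (Set.toFinite _)).1 (by have := hsite.2; omega)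
  obtain ⟨u, hu, v, hv, huv⟩ := htwo
  refine ⟨a, b, hsite, hcov1, hcov2, hlu.1, hlu.2, ?_, ?_⟩
  · intro haT
    apply hkey a haT
    left
    rintro ⟨w, -, hw⟩
    exact huv ((hw u hu).trans (hw v hv).symm)
  · intro hbT
    apply hkey b hbT
    right
    rintro ⟨w, -, hw⟩
    have hu' : u ⋖ b := by have : u ∈ {x | a ⋖ x} := hu; rwa [hsite.1] at this
    have hv' : v ⋖ b := by have : v ∈ {x | a ⋖ x} := hv; rwa [hsite.1] at this
    exact huv ((hw u hu').trans (hw v hv').symm)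

/-- Every decoration site keeps a cover of `a` outside `T`. -/
lemma exists_cover_notMem {T : Set α} (hT : TrinketRemovalSet T) {a b : α}
    (hsite : DecorationSite a b) : ∃ c, a ⋖ c ∧ c ∉ T := by
  by_contra h
  push_neg at h
  have hsub : {x | a ⋖ x} ⊆ T ∩ siteTrinkets a b := by
    intro c hc
    have hcT : c ∈ T := h c hc
    obtain ⟨a', b', _, hdi', _⟩ := hT.2 c hcT
    have hcb : c ⋖ b := by rwa [hsite.1] at hc
    exact ⟨hcT, hdi', hc.lt, hcb.lt⟩
  have h1 : {x | a ⋖ x}.ncard ≤ (T ∩ siteTrinkets a b).ncard :=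
    Set.ncard_le_ncard hsub (Set.toFinite _)
  rw [hT.1 a b hsite] at h1
  have h2 := hsite.2
  have h3 : min (siteTrinkets a b).ncard ({x | a ⋖ x}.ncard - 2) ≤ {x | a ⋖ x}.ncard - 2 :=
    min_le_right _ _
  omega

variable {T : Set α} {S : Sublattice α}

lemma mem_S (hS : (S : Set α) = Tᶜ) {x : α} : x ∈ S ↔ x ∉ T := by
  rw [← SetLike.mem_coe, hS]; rfl

/-- Covering relations in the sublattice coincide with covering relations in `α`. -/
lemma cover_transfer (hT : TrinketRemovalSet T) (hS : (S : Set α) = Tᶜ)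
    {x y : α} (hx : x ∈ S) (hy : y ∈ S) :
    (⟨x, hx⟩ : ↥S) ⋖ ⟨y, hy⟩ ↔ x ⋖ y := by
  constructor
  · rintro ⟨hlt, hbet⟩
    have hlt' : x < y := hlt
    by_contra hnc
    have hz : ∃ z, x < z ∧ z < y := by
      by_contra h
      push_neg at h
      exact hnc ⟨hlt', h⟩
    obtain ⟨z, hxz, hzy⟩ := hz
    -- z must have been removed, otherwise it contradicts the sublattice cover
    have hzT : z ∈ T := by
      by_contra hzT
      exact hbet (show (⟨x, hx⟩ : ↥S) < ⟨z, (mem_S hS).2 hzT⟩ from hxz)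
        (show (⟨z, (mem_S hS).2 hzT⟩ : ↥S) < ⟨y, hy⟩ from hzy)
    obtain ⟨a, b, hsite, haz, hzb, hlun, huun, haT, hbT⟩ := trinket_props hT hzT
    have haS : a ∈ S := (mem_S hS).2 haT
    have hbS : b ∈ S := (mem_S hS).2 hbT
    -- x ≤ a
    have hxa : x ≤ a := by
      obtain ⟨c, hc, hcz⟩ := exists_le_covBy_of_lt hxz
      rwa [hlun c hcz] at hc
    -- b ≤ y
    have hby : b ≤ y := by
      obtain ⟨c, hc, hcy⟩ := exists_covBy_le_of_lt hzy
      rwa [huun c hc] at hcy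
    have hxea : x = a := by
      rcases hxa.lt_or_eq with h' | h'
      · have hay : a < y := lt_of_lt_of_le (haz.lt.trans hzb.lt) hby
        exact absurd (hbet (show (⟨x, hx⟩ : ↥S) < ⟨a, haS⟩ from h')
          (show (⟨a, haS⟩ : ↥S) < ⟨y, hy⟩ from hay)) id
      · exact h'
    have hyeb : y = b := by
      rcases hby.lt_or_eq with h' | h'
      · have hxb : x < b := lt_of_le_of_lt hxa (haz.lt.trans hzb.lt)
        exact absurd (hbet (show (⟨x, hx⟩ : ↥S) < ⟨b, hbS⟩ from hxb)
          (show (⟨b, hbS⟩ : ↥S) < ⟨y, hy⟩ from h')) id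
      · exact h'.symm
    -- but at least one cover of a survives, lying strictly between x = a and y = b
    obtain ⟨c, hac, hcT⟩ := exists_cover_notMem hT hsite
    have hcb : c ⋖ b := by
      have : c ∈ {w | a ⋖ w} := hac
      rwa [hsite.1] at this
    have hcS : c ∈ S := (mem_S hS).2 hcT
    exact hbet (show (⟨x, hx⟩ : ↥S) < ⟨c, hcS⟩ from hxea ▸ hac.lt)
      (show (⟨c, hcS⟩ : ↥S) < ⟨y, hy⟩ from hyeb ▸ hcb.lt)
  · rintro ⟨hlt, hbet⟩
    exact ⟨hlt, fun c hc hc' => hbet hc hc'⟩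

end Aux

/-- If `a` is covered by two distinct elements `x ≠ y`, then `x < x ⊔ y`. -/
lemma lt_sup_of_covBy {α : Type*} [Lattice α] {a x y : α} (hxy : x ≠ y)
    (hax : a ⋖ x) (hay : a ⋖ y) : x < x ⊔ y := by
  refine left_lt_sup.2 fun hle => ?_
  rcases lt_or_eq_of_le hle with h' | h'
  · exact hax.2 hay.lt h'
  · exact hxy h'.symm

/-- A finite lattice is semimodular (in the sense of Birkhoff's condition) iff
the lattice obtained by removing a trinket-removal set is semimodular. -/
theorem stmt_12 {α : Type*} [Lattice α] [Finite α] [Nonempty α] (T : Set α)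
    (hT : TrinketRemovalSet T) (S : Sublattice α) (hS : (S : Set α) = Tᶜ) :
    Semimodular α ↔ Semimodular ↥S := by
  constructor
  · intro hsm a x y hxy hax hay
    have hax' : (a : α) ⋖ x :=
      (cover_transfer hT hS a.2 x.2).1 (show (⟨a.1, a.2⟩ : ↥S) ⋖ ⟨x.1, x.2⟩ from hax)
    have hay' : (a : α) ⋖ y :=
      (cover_transfer hT hS a.2 y.2).1 (show (⟨a.1, a.2⟩ : ↥S) ⋖ ⟨y.1, y.2⟩ from hay)
    have hxy' : (x : α) ≠ y := fun h => hxy (Subtype.ext h)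
    obtain ⟨h1, h2⟩ := hsm a.1 x.1 y.1 hxy' hax' hay'
    constructor
    · exact show (⟨x.1, x.2⟩ : ↥S) ⋖ ⟨x.1 ⊔ y.1, (x ⊔ y).2⟩ from
        (cover_transfer hT hS x.2 (x ⊔ y).2).2 h1
    · exact show (⟨y.1, y.2⟩ : ↥S) ⋖ ⟨x.1 ⊔ y.1, (x ⊔ y).2⟩ from
        (cover_transfer hT hS y.2 (x ⊔ y).2).2 h2
  · intro hsm a x y hxy hax hay
    -- if x was removed, the conclusion holds directly from the decoration site
    by_cases hxT : x ∈ T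
    · obtain ⟨a', b', hsite, ha'x, hxb', hlun, huun, _, _⟩ := trinket_props hT hxT
      have haa' : a = a' := hlun a hax
      subst haa'
      have hyb' : y ⋖ b' := by
        have : y ∈ {w | a ⋖ w} := hay
        rwa [hsite.1] at this
      have hsup : x ⊔ y = b' := by
        have h1 : x < x ⊔ y := lt_sup_of_covBy hxy hax hay
        have h2 : x ⊔ y ≤ b' := sup_le hxb'.le hyb'.le
        rcases lt_or_eq_of_le h2 with h' | h'
        · exact absurd h' (hxb'.2 h1)
        · exact h'
      rw [hsup]
      exact ⟨hxb', hyb'⟩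
    · by_cases hyT : y ∈ T
      · obtain ⟨a', b', hsite, ha'y, hyb', hlun, huun, _, _⟩ := trinket_props hT hyT
        have haa' : a = a' := hlun a hay
        subst haa'
        have hxb' : x ⋖ b' := by
          have : x ∈ {w | a ⋖ w} := hax
          rwa [hsite.1] at this
        have hsup : x ⊔ y = b' := by
          have h1 : y < x ⊔ y := by
            rw [sup_comm]; exact lt_sup_of_covBy (Ne.symm hxy) hay hax
          have h2 : x ⊔ y ≤ b' := sup_le hxb'.le hyb'.le
          rcases lt_or_eq_of_le h2 with h' | h'
          · exact absurd h' (hyb'.2 h1)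
          · exact h'
        rw [hsup]
        exact ⟨hxb', hyb'⟩
      · -- none of a, x, y, x ⊔ y was removed
        have haT : a ∉ T := by
          intro haT
          obtain ⟨a', b', _, _, _, _, huun, _, _⟩ := trinket_props hT haT
          exact hxy ((huun x hax).trans (huun y hay).symm)
        have hsT : x ⊔ y ∉ T := by
          intro hsupT
          obtain ⟨a', b', _, ha's, _, hlun, _, _, _⟩ := trinket_props hT hsupT
          have hxlt : x < x ⊔ y := lt_sup_of_covBy hxy hax hay
          have hylt : y < x ⊔ y := by
            rw [sup_comm]; exact lt_sup_of_covBy (Ne.symm hxy) hay hax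
          have hxa' : x ≤ a' := by
            obtain ⟨c, hc, hcs⟩ := exists_le_covBy_of_lt hxlt
            rwa [hlun c hcs] at hc
          have hya' : y ≤ a' := by
            obtain ⟨c, hc, hcs⟩ := exists_le_covBy_of_lt hylt
            rwa [hlun c hcs] at hc
          exact absurd (sup_le hxa' hya') (not_le_of_gt ha's.lt)
        have haS : a ∈ S := (mem_S hS).2 haT
        have hxS : x ∈ S := (mem_S hS).2 hxT
        have hyS : y ∈ S := (mem_S hS).2 hyT
        have hsS : x ⊔ y ∈ S := S.supClosed hxS hyS
        have hxy' : (⟨x, hxS⟩ : ↥S) ≠ ⟨y, hyS⟩ := fun h => hxy (congrArg Subtype.val h)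
        obtain ⟨h1, h2⟩ := hsm ⟨a, haS⟩ ⟨x, hxS⟩ ⟨y, hyS⟩ hxy'
          ((cover_transfer hT hS haS hxS).2 hax) ((cover_transfer hT hS haS hyS).2 hay)
        constructor
        · exact (cover_transfer hT hS hxS hsS).1 h1
        · exact (cover_transfer hT hS hyS hsS).1 h2
end
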